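/- If there exists an integer relative Heffter array H_k(n;k) (the case t = k), then necessarily one of the following holds: (1) k is odd and n ≡ 0 or 3 (mod 4); (2) k ≡ 2 (mod 4) and n is even; (3) k ≡ 0 (mod 4). -/

import Mathlib

/-- Number of filled cells in row `i` of the partially filled array `A`. -/
def rowFilled {m n : ℕ} (A : Fin m → Fin n → Option ℤ) (i : Fin m) : ℕ :=
  (Finset.univ.filter fun j => (A i j).isSome).card

/-- Number of filled cells in column `j` of the partially filled array `A`. -/
def colFilled {m n : ℕ} (A : Fin m → Fin n → Option ℤ) (j : Fin n) : ℕ :=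
  (Finset.univ.filter fun i => (A i j).isSome).card

/-- Sum of the entries of row `i` (empty cells count as `0`). -/
def rowSum {m n : ℕ} (A : Fin m → Fin n → Option ℤ) (i : Fin m) : ℤ :=
  ∑ j, (A i j).getD 0

/-- Sum of the entries of column `j` (empty cells count as `0`). -/
def colSum {m n : ℕ} (A : Fin m → Fin n → Option ℤ) (j : Fin n) : ℤ :=
  ∑ i, (A i j).getD 0

/-- `A` is a square integer relative Heffter array `H_t(n;k)`, written with
integer entries: each row and each column has exactly `k` filled cells, each
row and column sums to `0` in `ℤ`, every entry `x` satisfies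
`1 ≤ |x| ≤ ⌊(2nk+t)/2⌋` with `|x|` not a multiple of `(2nk+t)/t` (i.e. the
class of `x` avoids the subgroup `J` of order `t`), and for every admissible
absolute value exactly one cell contains it (up to sign), so that every class
of `ZMod (2nk+t) \ J` is represented exactly once up to sign. -/
def IsIntHeffter (n k t : ℕ) (A : Fin n → Fin n → Option ℤ) : Prop :=
  (∀ i, rowFilled A i = k) ∧
  (∀ j, colFilled A j = k) ∧
  (∀ i, rowSum A i = 0) ∧
  (∀ j, colSum A j = 0) ∧
  (∀ i j x, A i j = some x →
    1 ≤ x.natAbs ∧ x.natAbs ≤ (2 * n * k + t) / 2 ∧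
      ¬ ((2 * n * k + t) / t ∣ x.natAbs)) ∧
  (∀ x : ℕ, 1 ≤ x → x ≤ (2 * n * k + t) / 2 → ¬ ((2 * n * k + t) / t ∣ x) →
    ∃! p : Fin n × Fin n, A p.1 p.2 = some (x : ℤ) ∨ A p.1 p.2 = some (-(x : ℤ)))

/-- A square partially filled integer array is shiftable if every row and every
column contains as many positive entries as negative entries. -/
def Shiftable {n : ℕ} (A : Fin n → Fin n → Option ℤ) : Prop :=
  (∀ i : Fin n, (Finset.univ.filter fun j => 0 < (A i j).getD 0).card =
      (Finset.univ.filter fun j => (A i j).getD 0 < 0).card) ∧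
  (∀ j : Fin n, (Finset.univ.filter fun i => 0 < (A i j).getD 0).card =
      (Finset.univ.filter fun i => (A i j).getD 0 < 0).card)

/-- `A` is cyclically `k`-diagonal: its filled cells are exactly those of `k`
consecutive cyclic diagonals (cell `(r,c)` lies on diagonal `r - c (mod n)`). -/
def CycDiagonal {n : ℕ} (k : ℕ) (A : Fin n → Fin n → Option ℤ) : Prop :=
  ∃ d : ZMod n, ∀ r c : Fin n, (A r c).isSome ↔
    ∃ j : ℕ, j < k ∧ ((r : ℕ) : ZMod n) - ((c : ℕ) : ZMod n) = d + (j : ZMod n)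

/-- `A` (of size `N` with `s ∣ N`) is cyclically `(s,k)`-diagonal: it is obtained
from a cyclically `k`-diagonal `(N/s) × (N/s)` array by blowing up each cell into
an `s × s` block and then cyclically shifting the columns by some offset. -/
def CycSKDiagonal (s k : ℕ) {N : ℕ} (A : Fin N → Fin N → Option ℤ) : Prop :=
  s ∣ N ∧ ∃ (d : ZMod (N / s)) (off : ℕ), ∀ r c : Fin N, (A r c).isSome ↔
    ∃ j : ℕ, j < k ∧
      (((r : ℕ) / s : ℕ) : ZMod (N / s)) - (((((c : ℕ) + off) % N) / s : ℕ) : ZMod (N / s))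
        = d + (j : ZMod (N / s))

/-- The support of a partially filled integer array: the set of absolute values
of its entries. -/
def suppSet {m n : ℕ} (A : Fin m → Fin n → Option ℤ) : Set ℕ :=
  {a | ∃ i j x, A i j = some x ∧ x.natAbs = a}

/-- The entries of `A` have pairwise distinct absolute values. -/
def DistinctAbs {m n : ℕ} (A : Fin m → Fin n → Option ℤ) : Prop :=
  ∀ i j i' j' x y, A i j = some x → A i' j' = some y →
    x.natAbs = y.natAbs → (i, j) = (i', j')

/-- The skeleton of a partially filled array: the set of its filled positions. -/
def skel {m n : ℕ} (A : Fin m → Fin n → Option ℤ) : Set (Fin m × Fin n) :=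
  {p | (A p.1 p.2).isSome}

/-- necessary conditions for the existence of an integer `H_k(n;k)`. -/
lemma castAbsZMod2 (x : ℤ) : ((x.natAbs : ℕ) : ZMod 2) = ((x : ℤ) : ZMod 2) := by
  rcases Int.natAbs_eq x with h | h
  · conv_rhs => rw [h]
    rw [Int.cast_natCast]
  · conv_rhs => rw [h]
    rw [Int.cast_neg, Int.cast_natCast, CharTwo.neg_eq]

lemma icc_gauss (M : ℕ) : (∑ i ∈ Finset.Icc 1 M, i) * 2 = M * (M + 1) := by
  have h1 : ∑ i ∈ Finset.range (M + 1), i = ∑ i ∈ Finset.Icc 1 M, i := by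
    rw [Finset.range_eq_Ico, Finset.sum_eq_sum_Ico_succ_bot (Nat.succ_pos M)]
    rw [Nat.zero_add, ← Finset.Ico_add_one_right_eq_Icc]; rfl
  rw [← h1, Finset.sum_range_id_mul_two, Nat.add_sub_cancel, Nat.mul_comm]

theorem intHeffter_Hk_necessary (n k : ℕ)
    (h : ∃ A : Fin n → Fin n → Option ℤ, IsIntHeffter n k k A) :
    (Odd k ∧ (n % 4 = 0 ∨ n % 4 = 3)) ∨
    (k % 4 = 2 ∧ Even n) ∨
    (k % 4 = 0) := by
  rcases Nat.eq_zero_or_pos k with hk0 | hkpos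
  · right; right; omega
  obtain ⟨A, hrow, hcol, hrs, hcs, hmem, huniq⟩ := h
  set q : ℕ := 2 * n + 1 with hq
  set M : ℕ := (2 * n * k + k) / 2 with hMdef
  have hqdiv : (2 * n * k + k) / k = q := by
    have h1 : 2 * n * k + k = k * q := by rw [hq]; ring
    rw [h1, Nat.mul_div_cancel_left _ hkpos]
  -- total sum is zero
  have hS : ∑ p : Fin n × Fin n, ((A p.1 p.2).getD 0) = (0 : ℤ) := by
    rw [Fintype.sum_prod_type]
    apply Finset.sum_eq_zero
    intro i _
    exact hrs i
  -- P : sum of absolute values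
  set P : ℕ := ∑ p : Fin n × Fin n, ((A p.1 p.2).getD 0).natAbs with hP
  have hP2 : ((P : ℕ) : ZMod 2) = 0 := by
    rw [hP]
    push_cast
    calc (∑ p : Fin n × Fin n, (((A p.1 p.2).getD 0).natAbs : ZMod 2))
        = ∑ p : Fin n × Fin n, (((A p.1 p.2).getD 0 : ℤ) : ZMod 2) :=
          Finset.sum_congr rfl fun p _ => castAbsZMod2 _
      _ = (((∑ p : Fin n × Fin n, (A p.1 p.2).getD 0 : ℤ)) : ZMod 2) := by push_cast; ring
      _ = 0 := by rw [hS]; exact Int.cast_zero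
  have hPeven : 2 ∣ P := (ZMod.natCast_eq_zero_iff P 2).mp hP2
  -- P equals the sum over the admissible set D
  set D : Finset ℕ := (Finset.Icc 1 M).filter (fun x => ¬ q ∣ x) with hD
  have hPD : P = ∑ x ∈ D, x := by
    have h1 : P = ∑ p ∈ Finset.univ.filter
        (fun p : Fin n × Fin n => (A p.1 p.2).isSome), ((A p.1 p.2).getD 0).natAbs := by
      rw [hP]
      refine (Finset.sum_subset (Finset.filter_subset _ _) ?_).symm
      intro p _ hp
      simp only [Finset.mem_filter, Finset.mem_univ, true_and] at hp
      rw [Option.not_isSome_iff_eq_none] at hp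
      rw [hp]; rfl
    rw [h1]
    refine Finset.sum_bij (fun p _ => ((A p.1 p.2).getD 0).natAbs) ?_ ?_ ?_ ?_
    · intro p hp
      simp only [Finset.mem_filter, Finset.mem_univ, true_and] at hp
      obtain ⟨x, hx⟩ := Option.isSome_iff_exists.mp hp
      obtain ⟨hb1, hb2, hb3⟩ := hmem p.1 p.2 x hx
      show ((A p.1 p.2).getD 0).natAbs ∈ D
      rw [hx]
      simp only [Option.getD_some]
      rw [hD]
      simp only [Finset.mem_filter, Finset.mem_Icc]
      rw [hqdiv] at hb3
      exact ⟨⟨hb1, by rw [hMdef]; exact hb2⟩, hb3⟩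
    · intro p₁ hp₁ p₂ hp₂ heq
      simp only [Finset.mem_filter, Finset.mem_univ, true_and] at hp₁ hp₂
      obtain ⟨x₁, hx₁⟩ := Option.isSome_iff_exists.mp hp₁
      obtain ⟨x₂, hx₂⟩ := Option.isSome_iff_exists.mp hp₂
      have heq' : x₁.natAbs = x₂.natAbs := by
        have h0 : ((A p₁.1 p₁.2).getD 0).natAbs = ((A p₂.1 p₂.2).getD 0).natAbs := heq
        rw [hx₁, hx₂] at h0
        exact h0
      obtain ⟨hb1, hb2, hb3⟩ := hmem p₁.1 p₁.2 x₁ hx₁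
      obtain ⟨p0, hp0, hu⟩ := huniq x₁.natAbs hb1 hb2 hb3
      have m₁ : A p₁.1 p₁.2 = some ((x₁.natAbs : ℕ) : ℤ) ∨
          A p₁.1 p₁.2 = some (-((x₁.natAbs : ℕ) : ℤ)) := by
        rcases Int.natAbs_eq x₁ with h' | h'
        · left; rw [hx₁]; exact congrArg some h'
        · right; rw [hx₁]; exact congrArg some h'
      have m₂ : A p₂.1 p₂.2 = some ((x₁.natAbs : ℕ) : ℤ) ∨
          A p₂.1 p₂.2 = some (-((x₁.natAbs : ℕ) : ℤ)) := by
        rcases Int.natAbs_eq x₂ with h' | h'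
        · left; rw [hx₂]; exact congrArg some (by rw [h', heq'])
        · right; rw [hx₂]; exact congrArg some (by rw [h', heq'])
      exact (hu p₁ m₁).trans (hu p₂ m₂).symm
    · intro x hx
      rw [hD] at hx
      simp only [Finset.mem_filter, Finset.mem_Icc] at hx
      obtain ⟨⟨hx1, hx2⟩, hx3⟩ := hx
      obtain ⟨p, hp, _⟩ := huniq x hx1 hx2 (by rw [hqdiv]; exact hx3)
      have hps : (A p.1 p.2).isSome := by
        rcases hp with h' | h' <;> rw [h'] <;> rfl
      refine ⟨p, by simp [hps], ?_⟩
      show ((A p.1 p.2).getD 0).natAbs = x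
      rcases hp with h' | h' <;> rw [h'] <;> simp
    · intro p hp; rfl
  -- sum over multiples
  set c : ℕ := M / q with hc
  have himg : (Finset.Icc 1 M).filter (fun x => q ∣ x)
      = (Finset.Icc 1 c).image (fun i => q * i) := by
    ext x
    simp only [Finset.mem_filter, Finset.mem_Icc, Finset.mem_image]
    constructor
    · rintro ⟨⟨h1, h2⟩, i, rfl⟩
      refine ⟨i, ⟨?_, ?_⟩, rfl⟩
      · rcases Nat.eq_zero_or_pos i with h' | h'
        · subst h'; simp at h1
        · exact h'
      · rw [hc]
        calc i = q * i / q := by rw [Nat.mul_div_cancel_left _ (by omega : 0 < q)]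
          _ ≤ M / q := Nat.div_le_div_right h2
    · rintro ⟨i, ⟨hi1, hi2⟩, rfl⟩
      refine ⟨⟨Nat.one_le_iff_ne_zero.mpr (by positivity), ?_⟩, ⟨i, rfl⟩⟩
      calc q * i ≤ q * c := Nat.mul_le_mul_left q hi2
        _ = M / q * q := by rw [hc, Nat.mul_comm]
        _ ≤ M := Nat.div_mul_le_self M q
  have hmul : ∑ x ∈ (Finset.Icc 1 M).filter (fun x => q ∣ x), x
      = q * ∑ i ∈ Finset.Icc 1 c, i := by
    rw [himg, Finset.sum_image (by intro a _ b _ hab; exact Nat.eq_of_mul_eq_mul_left (by omega) hab)]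
    rw [Finset.mul_sum]
  have hsplit : (∑ x ∈ (Finset.Icc 1 M).filter (fun x => q ∣ x), x) + ∑ x ∈ D, x
      = ∑ x ∈ Finset.Icc 1 M, x := by
    rw [hD]
    exact Finset.sum_filter_add_sum_filter_not _ _ _
  -- the key equation
  obtain ⟨e, he⟩ := hPeven
  have Key : 2 * (2 * e) + q * (c * (c + 1)) = M * (M + 1) := by
    have h2 : ((∑ x ∈ (Finset.Icc 1 M).filter (fun x => q ∣ x), x) + ∑ x ∈ D, x) * 2
        = M * (M + 1) := by rw [hsplit]; exact icc_gauss M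
    rw [add_mul, hmul, ← hPD] at h2
    have h3 : q * (∑ i ∈ Finset.Icc 1 c, i) * 2 = q * (c * (c + 1)) := by
      rw [mul_assoc, icc_gauss c]
    rw [h3] at h2
    have h4 : P = 2 * e := by omega
    rw [h4] at h2
    linarith
  -- pass to ZMod 4
  have Key4 : (2 * (n : ZMod 4) + 1) * ((c : ZMod 4) * ((c : ZMod 4) + 1))
      = (M : ZMod 4) * ((M : ZMod 4) + 1) := by
    have h0 := congrArg (fun x : ℕ => (x : ZMod 4)) Key
    push_cast at h0
    have h41 : (2 : ZMod 4) * (2 * (e : ZMod 4)) = 0 := by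
      rw [← mul_assoc, show (2 : ZMod 4) * 2 = 0 from by decide, zero_mul]
    calc (2 * (n : ZMod 4) + 1) * ((c : ZMod 4) * ((c : ZMod 4) + 1))
        = 2 * (2 * (e : ZMod 4)) + (2 * (n : ZMod 4) + 1)
            * ((c : ZMod 4) * ((c : ZMod 4) + 1)) := by rw [h41, zero_add]
      _ = (M : ZMod 4) * ((M : ZMod 4) + 1) := by rw [hq] at h0; push_cast at h0; exact h0
  -- case analysis on parity of k
  rcases Nat.even_or_odd k with ⟨b, hb⟩ | ⟨b, hb⟩
  · -- k = b + b even
    have hM2 : M = 2 * n * b + b := by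
      have h1 : 2 * n * k + k = (2 * n * b + b) * 2 := by rw [hb]; ring
      rw [hMdef, h1, Nat.mul_div_cancel _ (by omega)]
    have hc2 : c = b := by
      have h1 : M = b * q := by rw [hM2, hq]; ring
      rw [hc, h1, Nat.mul_div_cancel _ (by omega : 0 < q)]
    rcases Nat.even_or_odd b with hbe | hbo
    · right; right; obtain ⟨d, hd⟩ := hbe; omega
    · rcases Nat.even_or_odd n with hne | hno
      · right; left
        exact ⟨by obtain ⟨d, hd⟩ := hbo; omega, hne⟩
      · exfalso
        rw [hc2, hM2] at Key4
        have hb4 : b % 4 = 1 ∨ b % 4 = 3 := by obtain ⟨d, hd⟩ := hbo; omega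
        have hn4 : n % 4 = 1 ∨ n % 4 = 3 := by obtain ⟨d, hd⟩ := hno; omega
        have hbc : ((b : ZMod 4)) = ((b % 4 : ℕ) : ZMod 4) := (ZMod.natCast_mod b 4).symm
        have hnc : ((n : ZMod 4)) = ((n % 4 : ℕ) : ZMod 4) := (ZMod.natCast_mod n 4).symm
        push_cast at Key4
        rw [hbc, hnc] at Key4
        rcases hb4 with h1 | h1 <;> rcases hn4 with h2 | h2 <;>
          rw [h1, h2] at Key4 <;> revert Key4 <;> decide
  · -- k = 2 * b + 1 odd
    have hM2 : M = 2 * n * b + n + b := by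
      have h1 : 2 * n * k + k = (2 * n * b + n + b) * 2 + 1 := by rw [hb]; ring
      rw [hMdef, h1]
      generalize 2 * n * b + n + b = Y
      omega
    have hc2 : c = b := by
      have h1 : M = n + q * b := by rw [hM2, hq]; ring
      rw [hc, h1, Nat.add_mul_div_left _ _ (by omega : 0 < q),
        Nat.div_eq_of_lt (by omega), Nat.zero_add]
    left
    refine ⟨⟨b, by omega⟩, ?_⟩
    rw [hc2, hM2] at Key4
    have hbc : ((b : ZMod 4)) = ((b % 4 : ℕ) : ZMod 4) := (ZMod.natCast_mod b 4).symm
    have hnc : ((n : ZMod 4)) = ((n % 4 : ℕ) : ZMod 4) := (ZMod.natCast_mod n 4).symm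
    push_cast at Key4
    rw [hbc, hnc] at Key4
    have hn4 : n % 4 = 0 ∨ n % 4 = 1 ∨ n % 4 = 2 ∨ n % 4 = 3 := by omega
    have hb4 : b % 4 = 0 ∨ b % 4 = 1 ∨ b % 4 = 2 ∨ b % 4 = 3 := by omega
    rcases hn4 with h2 | h2 | h2 | h2
    · left; exact h2
    · exfalso
      rcases hb4 with h1 | h1 | h1 | h1 <;> rw [h1, h2] at Key4 <;> revert Key4 <;> decide
    · exfalso
      rcases hb4 with h1 | h1 | h1 | h1 <;> rw [h1, h2] at Key4 <;> revert Key4 <;> decide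
    · right; exact h2
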